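/- The determinant of the lower triangular matrix Y with entries Y_{jk} = [θ(aq^{2j-3})/θ(aq^{-1})] · (aq^{-1}, q^{1-k}, eq^{k-2})_{j-1} / (q, aq^{k-1}, aq^{2-k}/e)_{j-1} · q^{j-1} equals (e/a)^{binom(n,2)} ∏_{j=2}^n (a, eq^{j-2})_{j-1} / (aq^{j-2}, e/a)_{j-1}. -/

import Mathlib

open Finset

/-- The modified theta function θ(x) = ∏_{j≥0} (1 - pʲx)(1 - pʲ⁺¹/x). -/
noncomputable def theta (p x : ℂ) : ℂ :=
  ∏' j : ℕ, ((1 - p ^ j * x) * (1 - p ^ (j + 1) * x⁻¹))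

/-- The elliptic shifted factorial (x)ₖ = θ(x)θ(xq)⋯θ(xq^{k-1}). -/
noncomputable def ell (p q x : ℂ) (k : ℕ) : ℂ :=
  ∏ l ∈ Finset.range k, theta p (x * q ^ l)


lemma hasProd_zero_of_eq_zero {f : ℕ → ℂ} (i : ℕ) (h : f i = 0) : HasProd f 0 := by
  have hev : ∀ᶠ s in Filter.atTop, ∏ b ∈ s, f b = 0 :=
    Filter.eventually_atTop.2 ⟨{i}, fun s hs =>
      Finset.prod_eq_zero (hs (Finset.mem_singleton_self i)) h⟩
  exact Filter.Tendsto.congr' (hev.mono fun s hs => hs.symm) tendsto_const_nhds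

lemma multipliable_one_sub (p c : ℂ) (hp : ‖p‖ < 1) :
    Multipliable (fun i : ℕ => 1 - p ^ i * c) := by
  by_cases h : ∃ i, 1 - p ^ i * c = 0
  · obtain ⟨i, hi⟩ := h
    exact ⟨0, hasProd_zero_of_eq_zero i hi⟩
  · push_neg at h
    refine Complex.multipliable_of_summable_log ?_
    have hgeo : Summable (fun n : ℕ => (3/2 : ℝ) * (‖p‖ ^ n * ‖c‖)) := by
      exact ((summable_geometric_of_lt_one (norm_nonneg p) hp).mul_right _).mul_left _
    have hten : Filter.Tendsto (fun n : ℕ => p ^ n * c) Filter.atTop (nhds 0) := by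
      simpa using (tendsto_pow_atTop_nhds_zero_of_norm_lt_one (by simpa using hp)).mul_const c
    have hev : ∀ᶠ n : ℕ in Filter.atTop, ‖Complex.log (1 - p ^ n * c)‖ ≤
        (3/2 : ℝ) * (‖p‖ ^ n * ‖c‖) := by
      have := (Metric.tendsto_atTop.1 hten (1/2) (by norm_num))
      obtain ⟨N, hN⟩ := this
      refine Filter.eventually_atTop.2 ⟨N, fun n hn => ?_⟩
      have hsmall : ‖-(p ^ n * c)‖ ≤ 1/2 := by
        have := hN n hn
        simp only [dist_zero_right] at this
        simpa using this.le
      have := Complex.norm_log_one_add_half_le_self hsmall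
      rw [show (1 : ℂ) + -(p ^ n * c) = 1 - p ^ n * c by ring] at this
      calc ‖Complex.log (1 - p ^ n * c)‖ ≤ 3/2 * ‖-(p ^ n * c)‖ := this
        _ = (3/2 : ℝ) * (‖p‖ ^ n * ‖c‖) := by
            simp [norm_mul, norm_pow]
    exact hgeo.of_norm_bounded_eventually_nat hev




lemma theta_one (p : ℂ) : theta p 1 = 0 := by
  unfold theta
  refine HasProd.tprod_eq (hasProd_zero_of_eq_zero 0 ?_)
  simp

lemma multipliable_shift (p c : ℂ) (hp : ‖p‖ < 1) :
    Multipliable (fun i : ℕ => 1 - p ^ (i + 1) * c) := by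
  have := multipliable_one_sub p (p * c) hp
  refine this.congr fun i => ?_
  ring

lemma theta_eq (p z : ℂ) (hp : ‖p‖ < 1) :
    theta p z = (∏' i : ℕ, (1 - p ^ i * z)) * (∏' i : ℕ, (1 - p ^ (i + 1) * z⁻¹)) :=
  Multipliable.tprod_mul (multipliable_one_sub p z hp) (multipliable_shift p z⁻¹ hp)

lemma tprod_split (p c : ℂ) (hp : ‖p‖ < 1) :
    (∏' i : ℕ, (1 - p ^ i * c)) = (1 - c) * ∏' i : ℕ, (1 - p ^ (i + 1) * c) := by
  have h := tprod_eq_zero_mul' (f := fun i : ℕ => 1 - p ^ i * c) (multipliable_shift p c hp)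
  simpa using h

lemma theta_inv (p z : ℂ) (hp : ‖p‖ < 1) (hz : z ≠ 0) :
    theta p z⁻¹ = -z⁻¹ * theta p z := by
  by_cases h1 : z = 1
  · subst h1; simp [theta_one]
  · have hz1 : (1 : ℂ) - z ≠ 0 := by
      intro h; apply h1; linear_combination -h
    have e1 : theta p z⁻¹ = (∏' i : ℕ, (1 - p ^ i * z⁻¹)) * (∏' i : ℕ, (1 - p ^ (i + 1) * z)) := by
      rw [theta_eq p z⁻¹ hp, inv_inv]
    rw [e1, theta_eq p z hp, tprod_split p z⁻¹ hp, tprod_split p z hp]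
    have : (1 - z⁻¹) = -z⁻¹ * (1 - z) := by field_simp; ring
    rw [this]; ring



variable {p q : ℂ}

lemma ell_succ (x : ℂ) (k : ℕ) :
    ell p q x (k + 1) = ell p q x k * theta p (x * q ^ k) :=
  Finset.prod_range_succ _ _

lemma ell_succ' (x : ℂ) (k : ℕ) :
    ell p q x (k + 1) = theta p x * ell p q (x * q) k := by
  rw [ell, Finset.prod_range_succ']
  simp only [pow_zero, mul_one, ell]
  rw [mul_comm]
  congr 1
  refine Finset.prod_congr rfl fun l _ => ?_
  ring_nf

lemma ell_reflect (hp : ‖p‖ < 1) (hq : q ≠ 0) (x : ℂ) (hx : x ≠ 0) (m : ℕ) :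
    x ^ m * (∏ l ∈ Finset.range m, q ^ l) * ell p q (x⁻¹ * q ^ (1 - (m : ℤ))) m =
      (-1) ^ m * ell p q x m := by
  have key : ∀ l ∈ Finset.range m,
      theta p (x⁻¹ * q ^ (1 - (m : ℤ)) * q ^ l) =
        -(x * q ^ (m - 1 - l))⁻¹ * theta p (x * q ^ (m - 1 - l)) := by
    intro l hl
    rw [Finset.mem_range] at hl
    have harg : x⁻¹ * q ^ (1 - (m : ℤ)) * q ^ l = (x * q ^ (m - 1 - l))⁻¹ := by
      rw [mul_inv, ← zpow_natCast q (m - 1 - l), ← zpow_neg, ← zpow_natCast q l,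
        mul_assoc, ← zpow_add₀ hq]
      congr 2
      omega
    rw [harg, theta_inv p _ hp (mul_ne_zero hx (pow_ne_zero _ hq))]
  rw [ell, Finset.prod_congr rfl key, Finset.prod_mul_distrib]
  have h2 : (∏ l ∈ Finset.range m, theta p (x * q ^ (m - 1 - l))) = ell p q x m := by
    rw [ell, Finset.prod_range_reflect (fun l => theta p (x * q ^ l)) m]
  rw [h2]
  have h1 : (∏ l ∈ Finset.range m, -(x * q ^ (m - 1 - l))⁻¹) =
      (-1) ^ m * (x ^ m * ∏ l ∈ Finset.range m, q ^ l)⁻¹ := by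
    have e1 : (∏ l ∈ Finset.range m, -(x * q ^ (m - 1 - l))⁻¹) =
        ∏ l ∈ Finset.range m, ((-1) * (x * q ^ (m - 1 - l))⁻¹) :=
      Finset.prod_congr rfl fun l _ => by ring
    rw [e1, Finset.prod_mul_distrib, Finset.prod_const, Finset.prod_inv_distrib,
      Finset.prod_mul_distrib, Finset.prod_const,
      Finset.prod_range_reflect (fun l => q ^ l) m, Finset.card_range]
  rw [h1]
  have hne : x ^ m * (∏ l ∈ Finset.range m, q ^ l) ≠ 0 :=
    mul_ne_zero (pow_ne_zero _ hx) (Finset.prod_ne_zero_iff.2 fun l _ => pow_ne_zero _ hq)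
  field_simp
  exact mul_div_cancel_left₀ _ (Finset.prod_ne_zero_iff.2 fun l _ => pow_ne_zero _ hq)



lemma alg (θ0 θt Ea E2 E4 E5 E6 Eq' EC X q' : ℂ) (hθ0 : θ0 ≠ 0) (hE2 : E2 ≠ 0)
    (hE4 : E4 ≠ 0) (hE5 : E5 ≠ 0) (hEq' : Eq' ≠ 0) (hEC : EC ≠ 0) (hq' : q' ≠ 0) :
    (θt * E2 / E4) / θ0 * ((θ0 * Ea) * (EC * (Eq' * X) / (E5 * q')) * E6) / (Eq' * E2 * EC) * q' =
      X * (Ea * θt * E6) / (E4 * E5) := by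
  field_simp

lemma diag (p q a e : ℂ) (t : ℕ)
    (hp : ‖p‖ < 1) (hq : q ≠ 0) (ha : a ≠ 0) (he : e ≠ 0)
    (hθ : theta p (a * q⁻¹) ≠ 0)
    (h1 : ell p q q (t + 1) ≠ 0)
    (h2 : ell p q (a * q ^ (t + 1)) (t + 1) ≠ 0)
    (h3 : ell p q (a * q ^ (1 - ((t + 1 : ℕ) : ℤ)) / e) (t + 1) ≠ 0)
    (h4 : ell p q (a * q ^ t) (t + 1) ≠ 0)
    (h5 : ell p q (e / a) (t + 1) ≠ 0) :
    theta p (a * q ^ (2 * ((t + 1 : ℕ) : ℤ) - 1)) / theta p (a * q⁻¹) *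
      (ell p q (a * q⁻¹) (t + 1) * ell p q (q ^ (-((t + 1 : ℕ) : ℤ))) (t + 1) *
        ell p q (e * q ^ (((t + 1 : ℕ) : ℤ) - 1)) (t + 1)) /
      (ell p q q (t + 1) * ell p q (a * q ^ (t + 1)) (t + 1) *
        ell p q (a * q ^ (1 - ((t + 1 : ℕ) : ℤ)) / e) (t + 1)) * q ^ (t + 1) =
    (e / a) ^ (t + 1) * (ell p q a (t + 1) * ell p q (e * q ^ t) (t + 1)) /
      (ell p q (a * q ^ t) (t + 1) * ell p q (e / a) (t + 1)) := by
  have hea : e / a ≠ 0 := div_ne_zero he ha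
  set P := ∏ l ∈ Finset.range (t + 1), q ^ l with hPdef
  have hP : P ≠ 0 := Finset.prod_ne_zero_iff.2 fun l _ => pow_ne_zero _ hq
  -- rewrite the zpow arguments
  have arg1 : a * q ^ (2 * ((t + 1 : ℕ) : ℤ) - 1) = a * q ^ (2 * t + 1) := by
    congr 1
    rw [← zpow_natCast q (2 * t + 1)]
    congr 1
    push_cast; ring
  have arg2 : (q : ℂ) ^ (-((t + 1 : ℕ) : ℤ)) = q⁻¹ * q ^ (1 - ((t + 1 : ℕ) : ℤ)) := by
    rw [← zpow_neg_one, ← zpow_add₀ hq]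
    congr 1; ring
  have arg3 : e * q ^ (((t + 1 : ℕ) : ℤ) - 1) = e * q ^ t := by
    congr 1
    rw [← zpow_natCast q t]
    congr 1; push_cast; ring
  have arg4 : a * q ^ (1 - ((t + 1 : ℕ) : ℤ)) / e = (e / a)⁻¹ * q ^ (1 - ((t + 1 : ℕ) : ℤ)) := by
    rw [div_eq_mul_inv, div_eq_mul_inv, mul_inv, inv_inv]; ring
  rw [arg1, arg2, arg3, arg4]
  rw [arg4] at h3
  -- key identities
  have hB := ell_reflect (p := p) hp hq q hq (t + 1)
  have hC := ell_reflect (p := p) hp hq (e / a) hea (t + 1)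
  have hA : ell p q (a * q⁻¹) (t + 1) = theta p (a * q⁻¹) * ell p q a t := by
    rw [ell_succ']
    congr 2
    field_simp
  have hE : ell p q a (t + 1) = ell p q a t * theta p (a * q ^ t) := ell_succ a t
  have hD : theta p (a * q ^ (2 * t + 1)) * ell p q (a * q ^ t) (t + 1) =
      theta p (a * q ^ t) * ell p q (a * q ^ (t + 1)) (t + 1) := by
    have e1 : ell p q (a * q ^ t) (t + 1 + 1) =
        ell p q (a * q ^ t) (t + 1) * theta p (a * q ^ (2 * t + 1)) := by
      rw [ell_succ]
      congr 2
      rw [mul_assoc, ← pow_add]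
      congr 2
      omega
    have e2 : ell p q (a * q ^ t) (t + 1 + 1) =
        theta p (a * q ^ t) * ell p q (a * q ^ (t + 1)) (t + 1) := by
      rw [ell_succ']
      congr 2
      rw [mul_assoc, ← pow_succ]
    rw [mul_comm, ← e1, e2]
  -- make everything opaque
  set θ0 := theta p (a * q⁻¹) with hθ0
  set θt := theta p (a * q ^ t) with hθt
  set θ2 := theta p (a * q ^ (2 * t + 1)) with hθ2
  set Ea := ell p q a t with hEa
  set EA := ell p q a (t + 1) with hEA
  set Eq' := ell p q q (t + 1) with hEq'
  set E2 := ell p q (a * q ^ (t + 1)) (t + 1) with hE2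
  set EB := ell p q (q⁻¹ * q ^ (1 - ((t + 1 : ℕ) : ℤ))) (t + 1) with hEB
  set EC := ell p q ((e / a)⁻¹ * q ^ (1 - ((t + 1 : ℕ) : ℤ))) (t + 1) with hEC
  set E4 := ell p q (a * q ^ t) (t + 1) with hE4
  set E5 := ell p q (e / a) (t + 1) with hE5
  set E6 := ell p q (e * q ^ t) (t + 1) with hE6
  rw [← hPdef] at hB hC
  have key : EB * (E5 * q ^ (t + 1)) * P = EC * (Eq' * (e / a) ^ (t + 1)) * P := by
    calc EB * (E5 * q ^ (t + 1)) * P = ((q ^ (t + 1) * P) * EB) * E5 := by ring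
      _ = ((-1) ^ (t + 1) * Eq') * E5 := by rw [hB]
      _ = ((-1) ^ (t + 1) * E5) * Eq' := by ring
      _ = (((e / a) ^ (t + 1) * P) * EC) * Eq' := by rw [hC]
      _ = EC * (Eq' * (e / a) ^ (t + 1)) * P := by ring
  have hRatio : EB = EC * (Eq' * (e / a) ^ (t + 1)) / (E5 * q ^ (t + 1)) :=
    eq_div_of_mul_eq (mul_ne_zero h5 (pow_ne_zero _ hq)) (mul_right_cancel₀ hP key)
  have hD' : θ2 = θt * E2 / E4 := eq_div_of_mul_eq h4 hD
  rw [hA, hE, hRatio, hD']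
  exact alg θ0 θt Ea E2 E4 E5 E6 Eq' EC ((e / a) ^ (t + 1)) (q ^ (t + 1))
    hθ h2 h4 h5 h1 h3 (pow_ne_zero _ hq)

/-- The determinant of the triangular matrix Y. -/
theorem Y_determinant (p q a e : ℂ) (n : ℕ)
    (hp : ‖p‖ < 1) (hq : q ≠ 0) (ha : a ≠ 0) (he : e ≠ 0)
    (hθ : theta p (a * q⁻¹) ≠ 0)
    (hden : ∀ (j k : Fin n),
      ell p q q (j : ℕ) * ell p q (a * q ^ (k : ℕ)) (j : ℕ) *
        ell p q (a * q ^ (1 - (k : ℤ)) / e) (j : ℕ) ≠ 0)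
    (hden' : ∀ j ∈ Finset.Icc 2 n,
      ell p q (a * q ^ (j - 2)) (j - 1) * ell p q (e / a) (j - 1) ≠ 0) :
    Matrix.det (Matrix.of fun j k : Fin n =>
        theta p (a * q ^ (2 * (j : ℤ) - 1)) / theta p (a * q⁻¹) *
          (ell p q (a * q⁻¹) (j : ℕ) * ell p q (q ^ (-(k : ℤ))) (j : ℕ) *
            ell p q (e * q ^ ((k : ℤ) - 1)) (j : ℕ)) /
          (ell p q q (j : ℕ) * ell p q (a * q ^ (k : ℕ)) (j : ℕ) *
            ell p q (a * q ^ (1 - (k : ℤ)) / e) (j : ℕ)) *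
          q ^ (j : ℕ)) =
      (e / a) ^ n.choose 2 *
        ∏ j ∈ Finset.Icc 2 n,
          (ell p q a (j - 1) * ell p q (e * q ^ (j - 2)) (j - 1)) /
            (ell p q (a * q ^ (j - 2)) (j - 1) * ell p q (e / a) (j - 1)) := by
  rcases Nat.eq_zero_or_pos n with hn | hn
  · subst hn
    simp [Matrix.det_isEmpty]
  set F : ℕ → ℂ := fun j =>
    (ell p q a (j - 1) * ell p q (e * q ^ (j - 2)) (j - 1)) /
      (ell p q (a * q ^ (j - 2)) (j - 1) * ell p q (e / a) (j - 1)) with hF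
  -- triangularity
  have tri : (Matrix.of fun j k : Fin n =>
      theta p (a * q ^ (2 * (j : ℤ) - 1)) / theta p (a * q⁻¹) *
        (ell p q (a * q⁻¹) (j : ℕ) * ell p q (q ^ (-(k : ℤ))) (j : ℕ) *
          ell p q (e * q ^ ((k : ℤ) - 1)) (j : ℕ)) /
        (ell p q q (j : ℕ) * ell p q (a * q ^ (k : ℕ)) (j : ℕ) *
          ell p q (a * q ^ (1 - (k : ℤ)) / e) (j : ℕ)) *
        q ^ (j : ℕ)).BlockTriangular id := by
    intro i j hij
    simp only [id_eq] at hij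
    have hzero : ell p q (q ^ (-(j : ℤ))) (i : ℕ) = 0 := by
      rw [ell]
      refine Finset.prod_eq_zero (Finset.mem_range.2 hij) ?_
      have : (q : ℂ) ^ (-(j : ℤ)) * q ^ (j : ℕ) = 1 := by
        rw [← zpow_natCast q (j : ℕ), ← zpow_add₀ hq]
        simp
      rw [this, theta_one]
    simp only [Matrix.of_apply]
    rw [hzero]
    ring
  rw [Matrix.det_of_upperTriangular tri]
  -- diagonal product
  have diag_eq : ∀ i : Fin n,
      (Matrix.of fun j k : Fin n =>
        theta p (a * q ^ (2 * (j : ℤ) - 1)) / theta p (a * q⁻¹) *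
          (ell p q (a * q⁻¹) (j : ℕ) * ell p q (q ^ (-(k : ℤ))) (j : ℕ) *
            ell p q (e * q ^ ((k : ℤ) - 1)) (j : ℕ)) /
          (ell p q q (j : ℕ) * ell p q (a * q ^ (k : ℕ)) (j : ℕ) *
            ell p q (a * q ^ (1 - (k : ℤ)) / e) (j : ℕ)) *
          q ^ (j : ℕ)) i i = (e / a) ^ (i : ℕ) * F ((i : ℕ) + 1) := by
    intro i
    simp only [Matrix.of_apply]
    have hd := hden i i
    rw [mul_ne_zero_iff, mul_ne_zero_iff] at hd
    obtain ⟨⟨h1, h2⟩, h3⟩ := hd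
    rcases Nat.eq_zero_or_pos (i : ℕ) with hi0 | hipos
    · rw [hi0]
      have harg : a * q ^ (2 * ((0 : ℕ) : ℤ) - 1) = a * q⁻¹ := by
        norm_num
      rw [harg]
      simp [hF, ell, div_self hθ]
    · obtain ⟨t, ht⟩ : ∃ t, (i : ℕ) = t + 1 := ⟨(i : ℕ) - 1, by omega⟩
      rw [ht] at h1 h2 h3 ⊢
      have hmem : t + 2 ∈ Finset.Icc 2 n := Finset.mem_Icc.2 ⟨by omega, by
        have := i.isLt; omega⟩
      have hd' := hden' (t + 2) hmem
      have e1 : t + 2 - 1 = t + 1 := by omega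
      have e2 : t + 2 - 2 = t := by omega
      rw [e1, e2, mul_ne_zero_iff] at hd'
      obtain ⟨h4, h5⟩ := hd'
      have := diag p q a e t hp hq ha he hθ h1 h2 h3 h4 h5
      rw [this, hF]
      simp only [e1, e2]
      ring
  rw [Finset.prod_congr rfl fun i _ => diag_eq i]
  rw [Fin.prod_univ_eq_prod_range (fun m => (e / a) ^ m * F (m + 1)) n]
  rw [Finset.prod_mul_distrib, Finset.prod_pow_eq_pow_sum]
  have hsum : ∑ m ∈ Finset.range n, m = n.choose 2 := by
    rw [Finset.sum_range_id, Nat.choose_two_right]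
  rw [hsum]
  congr 1
  -- reindex the product
  have hF1 : F 1 = 1 := by
    simp [hF, ell]
  have step1 : ∏ m ∈ Finset.range n, F (m + 1) = ∏ j ∈ Finset.Icc 1 n, F j := by
    rw [← Finset.Ico_add_one_right_eq_Icc, Finset.prod_Ico_eq_prod_range]
    have : n + 1 - 1 = n := by omega
    rw [this]
    exact Finset.prod_congr rfl fun m _ => by rw [add_comm]
  have step2 : Finset.Icc 1 n = insert 1 (Finset.Icc 2 n) := by
    ext x
    simp only [Finset.mem_Icc, Finset.mem_insert]
    omega
  rw [step1, step2, Finset.prod_insert (by simp), hF1, one_mul]
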